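/- Let k be a field, s ≥ 1, f_1,…,f_s ∈ k[X_0,X_1,…,X_s], p ∈ k, and ξ = (ξ_1,…,ξ_s) ∈ k^s such that f_i(p,ξ) = 0 for 1 ≤ i ≤ s and det((∂f_i/∂X_j)(p,ξ))_{1≤i,j≤s} ≠ 0, where the partial derivatives are with respect to X_1,…,X_s. Then there exists a unique s-tuple R = (R_1,…,R_s) of formal power series in k⟦t⟧ such that f_i(p+t, R) = 0 in k⟦t⟧ for every 1 ≤ i ≤ s and the constant term of R_m equals ξ_m for every 1 ≤ m ≤ s. -/

import Mathlib

noncomputable section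

open MvPolynomial

variable {k : Type*}

/-- Substitution `X₀ ↦ p + t`, `X_m ↦ R m` of a polynomial `f ∈ k[X₀, X₁, …, X_s]` into the
power series ring `k⟦t⟧`. -/
def psSubst [Field k] {s : ℕ} (p : k) (R : Fin s → PowerSeries k)
    (f : MvPolynomial (Fin (s + 1)) k) : PowerSeries k :=
  aeval (fun v : Fin (s + 1) =>
    Fin.cases (PowerSeries.C p + PowerSeries.X) R v) f

lemma taylor_aux {A : Type*} [CommRing A] {σ : Type*} [Fintype σ] [DecidableEq σ]
    (f : MvPolynomial σ A) (a b : σ → A) (x : A) (hb : ∀ j, x ∣ b j) :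
    x ^ 2 ∣ eval (fun v => a v + b v) f - eval a f - ∑ j, eval a (pderiv j f) * b j := by
  induction f using MvPolynomial.induction_on with
  | C r => simp
  | add f g hf hg =>
      have := dvd_add hf hg
      convert this using 1
      simp only [map_add, Finset.sum_add_distrib, Finset.mul_sum, add_mul]
      ring
  | mul_X f i hf =>
      obtain ⟨q, hq⟩ := hf
      have hL : x ∣ ∑ j, eval a (pderiv j f) * b j :=
        Finset.dvd_sum fun j _ => Dvd.dvd.mul_left (hb j) _
      have hsum : ∑ j, eval a (pderiv j (f * X i)) * b j
          = a i * (∑ j, eval a (pderiv j f) * b j) + eval a f * b i := by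
        have : ∀ j, eval a (pderiv j (f * X i)) * b j
            = a i * (eval a (pderiv j f) * b j) + eval a f * (if i = j then b j else 0) := by
          intro j
          rw [pderiv_mul, pderiv_X]
          by_cases h : i = j
          · subst h; simp [Pi.single_apply]; ring
          · simp [Pi.single_apply, h]; ring
        rw [Finset.sum_congr rfl fun j _ => this j, Finset.sum_add_distrib, ← Finset.mul_sum,
          ← Finset.mul_sum, Finset.sum_ite_eq (Finset.univ) i (fun j => b j)]
        simp
      rw [hsum]
      have key : eval (fun v => a v + b v) (f * X i) - eval a (f * X i)
          - (a i * (∑ j, eval a (pderiv j f) * b j) + eval a f * b i)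
          = (∑ j, eval a (pderiv j f) * b j) * b i + x ^ 2 * q * (a i + b i) := by
        have h1 : eval (fun v => a v + b v) f
            = eval a f + (∑ j, eval a (pderiv j f) * b j) + x ^ 2 * q := by
          rw [← hq]; ring
        simp only [eval_mul, eval_X, h1]
        ring
      rw [key]
      refine dvd_add ?_ ⟨q * (a i + b i), by ring⟩
      obtain ⟨u, hu⟩ := hL; obtain ⟨v, hv⟩ := hb i
      exact ⟨u * v, by rw [hu, hv]; ring⟩

lemma eval_congr_dvd {A : Type*} [CommRing A] {σ : Type*} [Fintype σ] [DecidableEq σ]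
    (f : MvPolynomial σ A) (g g' : σ → A) (x : A) (h : ∀ v, x ∣ g v - g' v) :
    x ∣ eval g f - eval g' f := by
  have := taylor_aux f g' (fun v => g v - g' v) x h
  have he : (fun v => g' v + (g v - g' v)) = g := by funext v; ring
  rw [he] at this
  obtain ⟨q, hq⟩ := this
  have : eval g f - eval g' f = x ^ 2 * q + ∑ j, eval g' (pderiv j f) * (g j - g' j) := by
    rw [← hq]; ring
  rw [this]
  exact dvd_add ⟨x * q, by ring⟩ (Finset.dvd_sum fun j _ => (h j).mul_left _)

section Aux

variable [Field k] {s : ℕ}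

lemma psSubst_eq_eval (p : k) (R : Fin s → PowerSeries k) (f : MvPolynomial (Fin (s+1)) k) :
    psSubst p R f = eval (fun v : Fin (s+1) =>
      Fin.cases (PowerSeries.C p + PowerSeries.X) R v)
      (f.map (PowerSeries.C (R := k))) := by
  rw [psSubst, aeval_def, eval_map, eval₂_eq', eval₂_eq']
  rfl

lemma constantCoeff_psSubst (p : k) (R : Fin s → PowerSeries k)
    (f : MvPolynomial (Fin (s+1)) k) :
    PowerSeries.constantCoeff (psSubst p R f)
      = eval (fun v : Fin (s+1) =>
          Fin.cases p (fun m => PowerSeries.constantCoeff (R m)) v) f := by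
  rw [psSubst, map_aeval]
  have h1 : (PowerSeries.constantCoeff (R := k)).comp (algebraMap k (PowerSeries k)) = RingHom.id k := by
    ext r
    simp [PowerSeries.algebraMap_apply]
  rw [eval₂Hom_congr h1 rfl rfl]
  rw [show (eval₂Hom (RingHom.id k) fun i =>
      (PowerSeries.constantCoeff (R := k)) (Fin.cases (PowerSeries.C p + PowerSeries.X) R i)) f
    = eval₂ (RingHom.id k) (fun i =>
      (PowerSeries.constantCoeff (R := k)) (Fin.cases (PowerSeries.C p + PowerSeries.X) R i)) f from rfl,
    eval₂_id]
  have h2 : (fun i : Fin (s+1) =>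
      (PowerSeries.constantCoeff (R := k)) (Fin.cases ((PowerSeries.C (R := k)) p + PowerSeries.X) R i))
      = fun v : Fin (s+1) => Fin.cases p (fun m => (PowerSeries.constantCoeff (R := k)) (R m)) v := by
    funext v
    induction v using Fin.cases with
    | zero => simp
    | succ m => simp
  rw [h2]

lemma psSubst_congr (p : k) (R R' : Fin s → PowerSeries k) (f : MvPolynomial (Fin (s+1)) k)
    (x : PowerSeries k) (h : ∀ m, x ∣ R m - R' m) :
    x ∣ psSubst p R f - psSubst p R' f := by
  rw [psSubst_eq_eval, psSubst_eq_eval]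
  apply eval_congr_dvd
  intro v
  induction v using Fin.cases with
  | zero => simp
  | succ m => exact h m

lemma psSubst_taylor (p : k) (R b : Fin s → PowerSeries k) (f : MvPolynomial (Fin (s+1)) k)
    (x : PowerSeries k) (hb : ∀ m, x ∣ b m) :
    x ^ 2 ∣ psSubst p (fun m => R m + b m) f - psSubst p R f
      - ∑ m : Fin s, psSubst p R (pderiv (Fin.succ m) f) * b m := by
  rw [psSubst_eq_eval, psSubst_eq_eval]
  have hb' : ∀ v : Fin (s+1), x ∣ (Fin.cases 0 b v : PowerSeries k) := by
    intro v
    induction v using Fin.cases with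
    | zero => simp
    | succ m => exact hb m
  have key := taylor_aux (f.map (PowerSeries.C (R := k)))
    (fun v : Fin (s+1) => Fin.cases (PowerSeries.C p + PowerSeries.X) R v)
    (fun v : Fin (s+1) => Fin.cases 0 b v) x hb'
  beta_reduce at key
  have he : (fun v : Fin (s+1) =>
      (Fin.cases (PowerSeries.C p + PowerSeries.X) R v : PowerSeries k)
        + (Fin.cases 0 b v : PowerSeries k))
      = fun v : Fin (s+1) =>
      (Fin.cases (PowerSeries.C p + PowerSeries.X) (fun m => R m + b m) v : PowerSeries k) := by
    funext v
    induction v using Fin.cases with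
    | zero => simp
    | succ m => simp
  rw [he] at key
  have hsum : ∑ v : Fin (s+1),
      eval (fun v : Fin (s+1) => Fin.cases (PowerSeries.C p + PowerSeries.X) R v)
        (pderiv v (f.map (PowerSeries.C (R := k)))) * Fin.cases 0 b v
      = ∑ m : Fin s, psSubst p R (pderiv (Fin.succ m) f) * b m := by
    rw [Fin.sum_univ_succ]
    simp only [Fin.cases_zero, mul_zero, zero_add, Fin.cases_succ]
    refine Finset.sum_congr rfl fun m _ => ?_
    rw [psSubst_eq_eval, pderiv_map]
  rw [hsum] at key
  exact key

lemma coeff_mul_of_dvd (n : ℕ) (u b : PowerSeries k)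
    (h : (PowerSeries.X : PowerSeries k) ^ (n+1) ∣ b) :
    PowerSeries.coeff (n+1) (u * b)
      = PowerSeries.constantCoeff u * PowerSeries.coeff (n+1) b := by
  rw [PowerSeries.coeff_mul]
  rw [Finset.sum_eq_single (0, n+1)]
  · simp [PowerSeries.coeff_zero_eq_constantCoeff]
  · rintro ⟨a, c⟩ hac hne
    rw [Finset.HasAntidiagonal.mem_antidiagonal] at hac
    have hc : c < n + 1 := by
      rcases Nat.lt_or_ge c (n+1) with h' | h'
      · exact h'
      · exfalso; apply hne
        have : c = n + 1 := le_antisymm (by omega) h'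
        simp [this]; omega
    rw [PowerSeries.X_pow_dvd_iff.mp h c hc, mul_zero]
  · intro hmem
    exfalso; exact hmem (by simp)

def newtonC (f : Fin s → MvPolynomial (Fin (s+1)) k) (p : k) (ξ : Fin s → k) :
    ℕ → Fin s → k
  | 0 => ξ
  | n+1 =>
    -(((Matrix.of fun i m : Fin s =>
        eval (fun v : Fin (s+1) => Fin.cases p ξ v) (pderiv (Fin.succ m) (f i)))⁻¹).mulVec
      fun i => PowerSeries.coeff (n+1) (psSubst p
        (fun m => ∑ j ∈ (Finset.range (n+1)).attach,
          PowerSeries.monomial j.1 (newtonC f p ξ j.1 m)) (f i)))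
  termination_by n => n
  decreasing_by exact Finset.mem_range.mp j.2

def newtonS (f : Fin s → MvPolynomial (Fin (s+1)) k) (p : k) (ξ : Fin s → k)
    (n : ℕ) : Fin s → PowerSeries k :=
  fun m => ∑ j ∈ Finset.range (n+1), PowerSeries.monomial j (newtonC f p ξ j m)

lemma newtonC_succ (f : Fin s → MvPolynomial (Fin (s+1)) k) (p : k) (ξ : Fin s → k) (n : ℕ) :
    newtonC f p ξ (n+1)
      = -(((Matrix.of fun i m : Fin s =>
          eval (fun v : Fin (s+1) => Fin.cases p ξ v) (pderiv (Fin.succ m) (f i)))⁻¹).mulVec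
        fun i => PowerSeries.coeff (n+1) (psSubst p (newtonS f p ξ n) (f i))) := by
  have h : ∀ m, (∑ j ∈ (Finset.range (n+1)).attach,
      PowerSeries.monomial j.1 (newtonC f p ξ j.1 m)) = newtonS f p ξ n m := fun m => by
    rw [newtonS]
    exact Finset.sum_attach (Finset.range (n+1)) (fun j => PowerSeries.monomial j (newtonC f p ξ j m))
  rw [newtonC]
  simp only [h]

lemma coeff_newtonS (f : Fin s → MvPolynomial (Fin (s+1)) k) (p : k) (ξ : Fin s → k)
    (n j : ℕ) (m : Fin s) :
    PowerSeries.coeff j (newtonS f p ξ n m)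
      = if j ≤ n then newtonC f p ξ j m else 0 := by
  rw [newtonS, map_sum]
  simp only [PowerSeries.coeff_monomial]
  rw [Finset.sum_ite_eq (Finset.range (n+1)) j (fun j => newtonC f p ξ j m)]
  simp [Nat.lt_succ_iff]

lemma newtonC_zero (f : Fin s → MvPolynomial (Fin (s+1)) k) (p : k) (ξ : Fin s → k) :
    newtonC f p ξ 0 = ξ := by rw [newtonC]

lemma constantCoeff_newtonS (f : Fin s → MvPolynomial (Fin (s+1)) k) (p : k) (ξ : Fin s → k)
    (n : ℕ) (m : Fin s) :
    PowerSeries.constantCoeff (newtonS f p ξ n m) = ξ m := by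
  rw [← PowerSeries.coeff_zero_eq_constantCoeff_apply, coeff_newtonS]
  simp [newtonC_zero]

lemma cases_constCoeff_newtonS (f : Fin s → MvPolynomial (Fin (s+1)) k) (p : k) (ξ : Fin s → k)
    (n : ℕ) :
    (fun v : Fin (s+1) =>
      (Fin.cases p (fun m => PowerSeries.constantCoeff (newtonS f p ξ n m)) v : k))
      = fun v : Fin (s+1) => Fin.cases p ξ v := by
  funext v
  induction v using Fin.cases with
  | zero => simp
  | succ m => simp [constantCoeff_newtonS]

lemma linearize (f : Fin s → MvPolynomial (Fin (s+1)) k) (p : k) (ξ : Fin s → k)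
    (n : ℕ) (T : Fin s → PowerSeries k) (g : MvPolynomial (Fin (s+1)) k)
    (hT : ∀ m, ∀ j, j ≤ n →
      PowerSeries.coeff j (T m) = PowerSeries.coeff j (newtonS f p ξ n m)) :
    PowerSeries.coeff (n+1) (psSubst p T g)
      = PowerSeries.coeff (n+1) (psSubst p (newtonS f p ξ n) g)
        + ∑ m : Fin s, eval (fun v : Fin (s+1) => Fin.cases p ξ v) (pderiv (Fin.succ m) g)
            * PowerSeries.coeff (n+1) (T m) := by
  set S := newtonS f p ξ n with hS
  set b : Fin s → PowerSeries k := fun m => T m - S m with hb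
  have hdvd : ∀ m, (PowerSeries.X : PowerSeries k)^(n+1) ∣ b m := by
    intro m
    rw [PowerSeries.X_pow_dvd_iff]
    intro j hj
    simp only [hb, map_sub, hT m j (Nat.lt_succ_iff.mp hj), sub_self]
  have ht := psSubst_taylor p S b g (PowerSeries.X^(n+1)) hdvd
  have hTb : (fun m => S m + b m) = T := by funext m; simp [hb]
  rw [hTb] at ht
  have h0 : PowerSeries.coeff (n+1) (psSubst p T g - psSubst p S g
      - ∑ m : Fin s, psSubst p S (pderiv (Fin.succ m) g) * b m) = 0 := by
    obtain ⟨q, hq⟩ := ht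
    rw [hq]
    have hdvd2 : (PowerSeries.X : PowerSeries k)^(n+2) ∣ ((PowerSeries.X : PowerSeries k)^(n+1))^2 * q := by
      refine Dvd.dvd.mul_right ?_ q
      rw [← pow_mul]
      exact pow_dvd_pow _ (by omega)
    exact PowerSeries.X_pow_dvd_iff.mp hdvd2 (n+1) (by omega)
  have hcoeffb : ∀ m, PowerSeries.coeff (n+1) (b m) = PowerSeries.coeff (n+1) (T m) := by
    intro m
    simp [hb, map_sub, hS, coeff_newtonS]
  have hterm : ∀ m, PowerSeries.coeff (n+1) (psSubst p S (pderiv (Fin.succ m) g) * b m)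
      = eval (fun v : Fin (s+1) => Fin.cases p ξ v) (pderiv (Fin.succ m) g)
        * PowerSeries.coeff (n+1) (T m) := by
    intro m
    rw [coeff_mul_of_dvd n _ _ (hdvd m), hcoeffb m]
    congr 1
    rw [hS, constantCoeff_psSubst, cases_constCoeff_newtonS]
  rw [map_sub, map_sub, map_sum] at h0
  rw [Finset.sum_congr rfl (fun m _ => hterm m)] at h0
  linear_combination h0

lemma invariant (f : Fin s → MvPolynomial (Fin (s+1)) k) (p : k) (ξ : Fin s → k)
    (hzero : ∀ i : Fin s, eval (fun v : Fin (s + 1) => Fin.cases p ξ v) (f i) = 0)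
    (hjac : (Matrix.of fun i m : Fin s =>
      eval (fun v : Fin (s + 1) => Fin.cases p ξ v) (pderiv (Fin.succ m) (f i))).det ≠ 0) :
    ∀ n : ℕ, ∀ i : Fin s, ∀ j ≤ n,
      PowerSeries.coeff j (psSubst p (newtonS f p ξ n) (f i)) = 0 := by
  set J := Matrix.of fun i m : Fin s =>
    eval (fun v : Fin (s + 1) => Fin.cases p ξ v) (pderiv (Fin.succ m) (f i)) with hJ
  have hJu : IsUnit J.det := isUnit_iff_ne_zero.mpr hjac
  intro n
  induction n with
  | zero =>
    intro i j hj
    interval_cases j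
    rw [PowerSeries.coeff_zero_eq_constantCoeff_apply, constantCoeff_psSubst,
      cases_constCoeff_newtonS]
    exact hzero i
  | succ n ih =>
    intro i j hj
    rcases Nat.lt_or_ge j (n+1) with hlt | hge
    · -- j ≤ n : congruence with newtonS n
      have hdvd : ∀ m, (PowerSeries.X : PowerSeries k)^(n+1)
          ∣ newtonS f p ξ (n+1) m - newtonS f p ξ n m := by
        intro m
        rw [PowerSeries.X_pow_dvd_iff]
        intro j' hj'
        have h1 := coeff_newtonS f p ξ (n+1) j' m
        have h2 := coeff_newtonS f p ξ n j' m
        rw [map_sub, h1, h2, if_pos (by omega), if_pos (by omega), sub_self]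
      have hc := psSubst_congr p (newtonS f p ξ (n+1)) (newtonS f p ξ n) (f i)
        (PowerSeries.X^(n+1)) hdvd
      have := PowerSeries.X_pow_dvd_iff.mp hc j hlt
      rw [map_sub] at this
      have h3 := ih i j (by omega)
      linear_combination this + h3
    · -- j = n+1
      have hjeq : j = n + 1 := by omega
      subst hjeq
      have hT : ∀ m, ∀ j', j' ≤ n →
          PowerSeries.coeff j' (newtonS f p ξ (n+1) m)
            = PowerSeries.coeff j' (newtonS f p ξ n m) := by
        intro m j' hj'
        rw [coeff_newtonS, coeff_newtonS, if_pos (by omega), if_pos (by omega)]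
      have hlin := linearize f p ξ n (newtonS f p ξ (n+1)) (f i) hT
      have hcoeff : ∀ m, PowerSeries.coeff (n+1) (newtonS f p ξ (n+1) m)
          = newtonC f p ξ (n+1) m := by
        intro m
        rw [coeff_newtonS, if_pos (le_refl _)]
      rw [hlin]
      set v : Fin s → k := fun i =>
        PowerSeries.coeff (n+1) (psSubst p (newtonS f p ξ n) (f i)) with hv
      have hsum : ∑ m : Fin s, eval (fun v : Fin (s + 1) => Fin.cases p ξ v)
            (pderiv (Fin.succ m) (f i)) * PowerSeries.coeff (n+1) (newtonS f p ξ (n+1) m)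
          = (J.mulVec (newtonC f p ξ (n+1))) i := by
        rw [Matrix.mulVec]
        simp only [dotProduct, hJ, Matrix.of_apply]
        exact Finset.sum_congr rfl fun m _ => by rw [hcoeff m]
      simp only [hcoeff] at hsum ⊢
      rw [hsum, newtonC_succ, Matrix.mulVec_neg, Matrix.mulVec_mulVec,
        Matrix.mul_nonsing_inv J hJu, Matrix.one_mulVec]
      simp [hv]


end Aux

/-- Newton–Hensel lemma.  If `f(p, ξ) = 0` and the Jacobian determinant of
`f` with respect to `X₁,…,X_s` does not vanish at `(p, ξ)`, then there is a unique tuple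
`R ∈ k⟦t⟧^s` of power series with `f(p+t, R) = 0` and constant term `ξ`. -/
theorem statement12 [Field k] {s : ℕ} (hs : 1 ≤ s)
    (f : Fin s → MvPolynomial (Fin (s + 1)) k) (p : k) (ξ : Fin s → k)
    (hzero : ∀ i : Fin s, eval (fun v : Fin (s + 1) => Fin.cases p ξ v) (f i) = 0)
    (hjac : (Matrix.of fun i m : Fin s =>
      eval (fun v : Fin (s + 1) => Fin.cases p ξ v) (pderiv (Fin.succ m) (f i))).det ≠ 0) :
    ∃! R : Fin s → PowerSeries k,
      (∀ i : Fin s, psSubst p R (f i) = 0) ∧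
      (∀ m : Fin s, PowerSeries.constantCoeff (R m) = ξ m) := by
  classical
  set J := Matrix.of fun i m : Fin s =>
    eval (fun v : Fin (s + 1) => Fin.cases p ξ v) (pderiv (Fin.succ m) (f i)) with hJ
  have hJu : IsUnit J.det := isUnit_iff_ne_zero.mpr hjac
  set R : Fin s → PowerSeries k := fun m => PowerSeries.mk fun n => newtonC f p ξ n m with hR
  have hRcoeff : ∀ n m, PowerSeries.coeff n (R m) = newtonC f p ξ n m := by
    intro n m; rw [hR]; exact PowerSeries.coeff_mk n _
  have hRdvd : ∀ n, ∀ m, (PowerSeries.X : PowerSeries k)^(n+1)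
      ∣ R m - newtonS f p ξ n m := by
    intro n m
    rw [PowerSeries.X_pow_dvd_iff]
    intro j hj
    rw [map_sub, hRcoeff, coeff_newtonS, if_pos (by omega), sub_self]
  have h1 : ∀ i, psSubst p R (f i) = 0 := by
    intro i
    ext n
    rw [map_zero]
    have hc := psSubst_congr p R (newtonS f p ξ n) (f i) (PowerSeries.X^(n+1)) (hRdvd n)
    have hz := PowerSeries.X_pow_dvd_iff.mp hc n (by omega)
    rw [map_sub] at hz
    have hinv := invariant f p ξ hzero hjac n i n (le_refl n)
    linear_combination hz + hinv
  have h2 : ∀ m, PowerSeries.constantCoeff (R m) = ξ m := by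
    intro m
    rw [← PowerSeries.coeff_zero_eq_constantCoeff_apply, hRcoeff, newtonC_zero]
  refine ⟨R, ⟨h1, h2⟩, ?_⟩
  rintro R' ⟨ha, hb⟩
  have claim : ∀ n, ∀ m, PowerSeries.coeff n (R' m) = newtonC f p ξ n m := by
    intro n
    induction n using Nat.strong_induction_on with
    | _ n ih =>
      match n with
      | 0 =>
        intro m
        rw [PowerSeries.coeff_zero_eq_constantCoeff_apply, hb, newtonC_zero]
      | (n'+1) =>
        set d : Fin s → k := fun m => PowerSeries.coeff (n'+1) (R' m) with hd
        have hT : ∀ m, ∀ j, j ≤ n' →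
            PowerSeries.coeff j (R' m) = PowerSeries.coeff j (newtonS f p ξ n' m) := by
          intro m j hj
          rw [coeff_newtonS, if_pos hj, ih j (by omega) m]
        set v : Fin s → k := fun i =>
          PowerSeries.coeff (n'+1) (psSubst p (newtonS f p ξ n') (f i)) with hv
        have hJmul : J.mulVec d = -v := by
          funext i
          have h := linearize f p ξ n' R' (f i) hT
          rw [ha i, map_zero] at h
          have hsum : ∑ m : Fin s, eval (fun v : Fin (s + 1) => Fin.cases p ξ v)
                (pderiv (Fin.succ m) (f i)) * PowerSeries.coeff (n'+1) (R' m)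
              = (J.mulVec d) i := by
            rw [Matrix.mulVec]
            simp only [dotProduct, hJ, Matrix.of_apply, hd]
          rw [hsum] at h
          simp only [Pi.neg_apply, hv]
          linear_combination -h
        have hdc : d = newtonC f p ξ (n'+1) := by
          have hid : d = (J⁻¹).mulVec (J.mulVec d) := by
            rw [Matrix.mulVec_mulVec, Matrix.nonsing_inv_mul J hJu, Matrix.one_mulVec]
          rw [hid, hJmul, Matrix.mulVec_neg, newtonC_succ]
        intro m
        calc PowerSeries.coeff (n'+1) (R' m) = d m := rfl
        _ = newtonC f p ξ (n'+1) m := by rw [hdc]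
  funext m
  ext n
  rw [claim n m, hRcoeff]
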